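/- Let G be a connected graph, let (X⁺,X⁻) be disjoint vertex sets, let c be a vertex and r an integer with X⁺ ⊆ B_G(c,r) and X⁻ ∩ B_G(c,r) = ∅. Let (A₁,A₂) be a separation of G with c ∈ A₁ and X⁺ ∪ X⁻ ⊆ A₂, and S = A₁ ∩ A₂. Define r⁺(v), r⁻(v) for v ∈ S as: r⁺(v) = max{dist_G(v,x) : x ∈ (X⁺∪X⁻) ∩ B_G(v, r - dist_G(c,v))}, r⁻(v) = min{dist_G(v,x) : x ∈ X⁻}. Then A₂ ∩ ⋃_{v∈S} B_G(v,r⁺(v)) ⊆ A₂ ∩ B_G(c,r) ⊆ A₂ ∩ ⋃_{v∈S} B_G(v, r⁻(v)-1). -/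
import Mathlib

lemma cross_sep {V : Type*} (G : SimpleGraph V) (A₁ A₂ : Set V)
    (hcover : A₁ ∪ A₂ = Set.univ)
    (hsep : ∀ a b, a ∈ A₁ \ A₂ → b ∈ A₂ \ A₁ → ¬ G.Adj a b) :
    ∀ {a u : V} (p : G.Walk a u), a ∈ A₁ → u ∈ A₂ →
      ∃ v ∈ p.support, v ∈ A₁ ∩ A₂ := by
  intro a u p
  induction p with
  | nil => intro ha hu; exact ⟨_, by simp, ha, hu⟩
  | @cons a b u h p ih =>
    intro ha hu
    by_cases ha2 : a ∈ A₂
    · exact ⟨a, by simp, ha, ha2⟩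
    · have hb : b ∈ A₁ ∪ A₂ := by rw [hcover]; trivial
      have hb1 : b ∈ A₁ := by
        rcases hb with hb | hb
        · exact hb
        · by_contra hb1
          exact hsep a b ⟨ha, ha2⟩ ⟨hb, hb1⟩ h
      obtain ⟨v, hv, hv2⟩ := ih hb1 hu
      exact ⟨v, by simp [hv], hv2⟩

theorem stmt10 {V : Type*} [Fintype V] (G : SimpleGraph V) (hG : G.Connected)
    (Xp Xm : Set V) (hdisj : Disjoint Xp Xm)
    (c : V) (r : ℤ)
    (hp : ∀ x ∈ Xp, (G.dist c x : ℤ) ≤ r)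
    (hm : ∀ x ∈ Xm, ¬ ((G.dist c x : ℤ) ≤ r))
    (A₁ A₂ : Set V) (hcover : A₁ ∪ A₂ = Set.univ)
    (hsep : ∀ a b, a ∈ A₁ \ A₂ → b ∈ A₂ \ A₁ → ¬ G.Adj a b)
    (hc : c ∈ A₁) (hX : Xp ∪ Xm ⊆ A₂) :
    -- `A₂ ∩ ⋃_{v ∈ S} B(v, r⁺(v)) ⊆ A₂ ∩ B(c, r) ⊆ A₂ ∩ ⋃_{v ∈ S} B(v, r⁻(v) - 1)`
    A₂ ∩ {u | ∃ v ∈ A₁ ∩ A₂, ∃ x ∈ Xp ∪ Xm,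
        (G.dist v x : ℤ) ≤ r - G.dist c v ∧ G.dist v u ≤ G.dist v x}
      ⊆ A₂ ∩ {u | (G.dist c u : ℤ) ≤ r} ∧
    A₂ ∩ {u | (G.dist c u : ℤ) ≤ r}
      ⊆ A₂ ∩ {u | ∃ v ∈ A₁ ∩ A₂, ∀ x ∈ Xm, G.dist v u < G.dist v x} := by
  classical
  constructor
  · rintro u ⟨hu2, v, hv, x, hx, hvx, hvu⟩
    refine ⟨hu2, show (G.dist c u : ℤ) ≤ r from ?_⟩
    have h1 : G.dist c u ≤ G.dist c v + G.dist v u := hG.dist_triangle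
    have h1' : (G.dist c u : ℤ) ≤ G.dist c v + G.dist v u := by exact_mod_cast h1
    have h2' : (G.dist v u : ℤ) ≤ G.dist v x := by exact_mod_cast hvu
    linarith
  · rintro u ⟨hu2, hcu⟩
    replace hcu : (G.dist c u : ℤ) ≤ r := hcu
    refine ⟨hu2, ?_⟩
    obtain ⟨p, hp⟩ := hG.exists_walk_length_eq_dist c u
    obtain ⟨v, hvsup, hv⟩ := cross_sep G A₁ A₂ hcover hsep p hc hu2
    refine ⟨v, hv, ?_⟩
    intro x hx
    have hdist : G.dist c v + G.dist v u ≤ G.dist c u := by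
      have := p.take_spec hvsup
      have hlen : (p.takeUntil v hvsup).length + (p.dropUntil v hvsup).length
          = p.length := by
        conv_rhs => rw [← this]
        rw [SimpleGraph.Walk.length_append]
      calc G.dist c v + G.dist v u
          ≤ (p.takeUntil v hvsup).length + (p.dropUntil v hvsup).length :=
            Nat.add_le_add (SimpleGraph.dist_le _) (SimpleGraph.dist_le _)
        _ = G.dist c u := by rw [hlen, hp]
    have htri : G.dist c x ≤ G.dist c v + G.dist v x := hG.dist_triangle
    have hmx := hm x hx
    push_cast at hmx
    have h1 : (G.dist c v : ℤ) + G.dist v u ≤ r := by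
      have : (G.dist c v + G.dist v u : ℤ) ≤ G.dist c u := by exact_mod_cast hdist
      linarith [hcu]
    have h2 : (G.dist c x : ℤ) ≤ G.dist c v + G.dist v x := by exact_mod_cast htri
    have : (G.dist v u : ℤ) < G.dist v x := by linarith
    exact_mod_cast this
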